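/- Let z₁, z₂, w₁, w₂ be four points on the unit circle with z₁ ≠ z₂ and w₁ ≠ w₂, and let T be a Möbius transformation of the unit disk onto itself with T(w₁) = z₁ and T(w₂) = z₂ satisfying the cross-ratio relation (T(w)−z₁)/(T(w)−z₂) · (w₀−z₂)/(w₀−z₁) = (w−w₁)/(w−w₂) · (z₀−w₂)/(z₀−w₁) for suitable boundary points w₀, z₀. Then T'(w₁)·T'(w₂) = ((z₁−z₂)/(w₁−w₂))². -/

import Mathlib

open Complex

/-- Let `z₁, z₂, w₁, w₂` be four points on the unit circle with
`z₁ ≠ z₂`, `w₁ ≠ w₂`, and let `T` be a Möbius transformation of the unit disk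
onto itself with `T w₁ = z₁`, `T w₂ = z₂` satisfying the cross-ratio relation
`(T w − z₁)/(T w − z₂) · (w₀ − z₂)/(w₀ − z₁) = (w − w₁)/(w − w₂) · (z₀ − w₂)/(z₀ − w₁)`
for suitable boundary points `w₀, z₀`.  Then
`T'(w₁) · T'(w₂) = ((z₁ − z₂)/(w₁ − w₂))²`. -/
theorem stmt2 (z₁ z₂ w₁ w₂ w₀ z₀ : ℂ)
    (hz₁ : ‖z₁‖ = 1) (hz₂ : ‖z₂‖ = 1)
    (hw₁ : ‖w₁‖ = 1) (hw₂ : ‖w₂‖ = 1)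
    (hw₀ : ‖w₀‖ = 1) (hz₀ : ‖z₀‖ = 1)
    (hz : z₁ ≠ z₂) (hw : w₁ ≠ w₂)
    (T : ℂ → ℂ) (a : ℂ) (θ : ℝ) (ha : ‖a‖ < 1)
    (hT : ∀ w, T w = Complex.exp (θ * I) * (w - a) / (1 - (starRingEnd ℂ) a * w))
    (hmaps : Set.BijOn T (Metric.ball (0 : ℂ) 1) (Metric.ball (0 : ℂ) 1))
    (hT₁ : T w₁ = z₁) (hT₂ : T w₂ = z₂)
    (hcross : ∀ w, w ≠ w₂ → T w ≠ z₂ →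
      (T w - z₁) / (T w - z₂) * ((w₀ - z₂) / (w₀ - z₁)) =
        (w - w₁) / (w - w₂) * ((z₀ - w₂) / (z₀ - w₁))) :
    deriv T w₁ * deriv T w₂ = ((z₁ - z₂) / (w₁ - w₂)) ^ 2 := by
  set c := (starRingEnd ℂ) a with hc
  have hne : ∀ w : ℂ, ‖w‖ = 1 → 1 - c * w ≠ 0 := by
    intro w hwabs h
    have : c * w = 1 := by linear_combination -h
    have habs : ‖c * w‖ = 1 := by rw [this]; simp
    rw [norm_mul, hc, Complex.norm_conj, hwabs, mul_one] at habs
    exact absurd habs (ne_of_lt ha)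
  have hTf : T = fun w => Complex.exp (θ * I) * (w - a) / (1 - c * w) := funext hT
  have hd : ∀ w : ℂ, 1 - c * w ≠ 0 →
      deriv T w = Complex.exp (θ * I) * (1 - c * a) / (1 - c * w) ^ 2 := by
    intro w hne0
    have h1 : HasDerivAt (fun w : ℂ => Complex.exp (θ * I) * (w - a))
        (Complex.exp (θ * I)) w := by
      simpa using ((hasDerivAt_id w).sub_const a).const_mul (Complex.exp (θ * I))
    have h2 : HasDerivAt (fun w : ℂ => 1 - c * w) (-c) w := by
      simpa using ((hasDerivAt_id w).const_mul c).const_sub 1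
    have h3 := h1.div h2 hne0
    rw [hTf]
    rw [(show HasDerivAt (fun w : ℂ => Complex.exp (θ * I) * (w - a) / (1 - c * w)) _ w from h3).deriv]
    field_simp
    ring
  have hne1 := hne w₁ hw₁
  have hne2 := hne w₂ hw₂
  rw [hd w₁ hne1, hd w₂ hne2, ← hT₁, ← hT₂, hT w₁, hT w₂]
  have hw' : w₁ - w₂ ≠ 0 := sub_ne_zero.mpr hw
  field_simp
  ring
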